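/- For every l ≥ 1, the 3-term recurrence (l+4)·f_{A_{l+2}}(t) = (2l+5)·(1-2t)·f_{A_{l+1}}(t) − (l+1)·f_{A_l}(t) holds in ℚ[t], where f_{A_l}(t) = Σ_{k=0}^{l} (-1)^k (1/(l+2))·C(l,k)·C(l+k+2,k+1)·t^k. -/

import Mathlib

open Polynomial Finset

noncomputable def fA (l : ℕ) : Polynomial ℚ :=
  ∑ k ∈ Finset.range (l + 1),
    Polynomial.C ((-1 : ℚ) ^ k * (1 / ((l : ℚ) + 2)) * (l.choose k) *
      ((l + k + 2).choose (k + 1))) * Polynomial.X ^ k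

lemma fA_coeff (l n : ℕ) : (fA l).coeff n =
    (-1 : ℚ) ^ n * (1 / ((l : ℚ) + 2)) * (l.choose n) * ((l + n + 2).choose (n + 1)) := by
  rw [fA, Polynomial.finset_sum_coeff]
  simp only [Polynomial.coeff_C_mul, Polynomial.coeff_X_pow, mul_ite, mul_one, mul_zero]
  rw [Finset.sum_ite_eq (Finset.range (l+1)) n]
  by_cases h : n ≤ l
  · simp [Finset.mem_range, Nat.lt_succ_iff, h]
  · simp [Finset.mem_range, Nat.lt_succ_iff, h, Nat.choose_eq_zero_of_lt (by omega : l < n)]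

set_option maxHeartbeats 1600000 in
lemma key (l n : ℕ) :
    ((l:ℚ)+4) * ((1/((l:ℚ)+2+2)) * ((l+2).choose (n+1)) * ((l+n+5).choose (n+2)))
      = (2*(l:ℚ)+5) * ((1/((l:ℚ)+1+2)) * ((l+1).choose (n+1)) * ((l+n+4).choose (n+2)))
        + 2*(2*(l:ℚ)+5) * ((1/((l:ℚ)+1+2)) * ((l+1).choose n) * ((l+n+3).choose (n+1)))
        - ((l:ℚ)+1) * ((1/((l:ℚ)+2)) * (l.choose (n+1)) * ((l+n+3).choose (n+2))) := by
  rcases lt_or_ge n l with h | h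
  · -- n + 1 ≤ l
    obtain ⟨m, rfl⟩ : ∃ m, l = n + 1 + m := ⟨l - (n+1), by omega⟩
    rw [Nat.cast_choose ℚ (show n+1 ≤ n+1+m+2 by omega),
        Nat.cast_choose ℚ (show n+2 ≤ n+1+m+n+5 by omega),
        Nat.cast_choose ℚ (show n+1 ≤ n+1+m+1 by omega),
        Nat.cast_choose ℚ (show n+2 ≤ n+1+m+n+4 by omega),
        Nat.cast_choose ℚ (show n ≤ n+1+m+1 by omega),
        Nat.cast_choose ℚ (show n+1 ≤ n+1+m+n+3 by omega),
        Nat.cast_choose ℚ (show n+1 ≤ n+1+m by omega),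
        Nat.cast_choose ℚ (show n+2 ≤ n+1+m+n+3 by omega),
        show n+1+m+2 - (n+1) = m+2 by omega,
        show n+1+m+n+5 - (n+2) = n+m+4 by omega,
        show n+1+m+1 - (n+1) = m+1 by omega,
        show n+1+m+n+4 - (n+2) = n+m+3 by omega,
        show n+1+m+1 - n = m+2 by omega,
        show n+1+m+n+3 - (n+1) = n+m+3 by omega,
        show n+1+m - (n+1) = m by omega,
        show n+1+m+n+3 - (n+2) = n+m+2 by omega,
        show n+1+m+2 = n+m+3 by omega,
        show n+1+m+n+5 = 2*n+m+6 by omega,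
        show n+1+m+1 = n+m+2 by omega,
        show n+1+m+n+4 = 2*n+m+5 by omega,
        show n+1+m+n+3 = 2*n+m+4 by omega,
        show n+1+m = n+m+1 by omega]
    push_cast [Nat.factorial_succ]
    have h2 : (n:ℚ)+(m:ℚ)+1+2 ≠ 0 := by positivity
    have h3 : (n:ℚ)+(m:ℚ)+1+1+2 ≠ 0 := by positivity
    have h4 : (n:ℚ)+(m:ℚ)+1+2+2 ≠ 0 := by positivity
    field_simp
    ring
  · rcases eq_or_lt_of_le h with rfl | h'
    · -- n = l
      rw [Nat.choose_eq_zero_of_lt (show l < l+1 by omega),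
          Nat.cast_choose ℚ (show l+1 ≤ l+2 by omega),
          Nat.cast_choose ℚ (show l+2 ≤ l+l+5 by omega),
          Nat.cast_choose ℚ (show l+1 ≤ l+1 by omega),
          Nat.cast_choose ℚ (show l+2 ≤ l+l+4 by omega),
          Nat.cast_choose ℚ (show l ≤ l+1 by omega),
          Nat.cast_choose ℚ (show l+1 ≤ l+l+3 by omega),
          show l+2 - (l+1) = 1 by omega,
          show l+l+5 - (l+2) = l+3 by omega,
          show l+1 - (l+1) = 0 by omega,
          show l+l+4 - (l+2) = l+2 by omega,
          show l+1 - l = 1 by omega,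
          show l+l+3 - (l+1) = l+2 by omega,
          show l+l+5 = 2*l+5 by omega,
          show l+l+4 = 2*l+4 by omega,
          show l+l+3 = 2*l+3 by omega]
      push_cast [Nat.factorial_succ, Nat.factorial_zero, Nat.factorial_one]
      have h2 : (l:ℚ)+2 ≠ 0 := by positivity
      have h3 : (l:ℚ)+1+2 ≠ 0 := by positivity
      have h4 : (l:ℚ)+2+2 ≠ 0 := by positivity
      field_simp
      ring
    · rcases eq_or_lt_of_le (show l+1 ≤ n by omega) with rfl | h''
      · -- n = l+1
        rw [Nat.choose_eq_zero_of_lt (show l+1 < l+1+1 by omega),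
            Nat.choose_eq_zero_of_lt (show l < l+1+1 by omega),
            Nat.cast_choose ℚ (show l+1+1 ≤ l+2 by omega),
            Nat.cast_choose ℚ (show l+1+2 ≤ l+(l+1)+5 by omega),
            Nat.cast_choose ℚ (show l+1 ≤ l+1 by omega),
            Nat.cast_choose ℚ (show l+1+1 ≤ l+(l+1)+3 by omega),
            show l+2 - (l+1+1) = 0 by omega,
            show l+(l+1)+5 - (l+1+2) = l+3 by omega,
            show l+1 - (l+1) = 0 by omega,
            show l+(l+1)+3 - (l+1+1) = l+2 by omega,
            show l+(l+1)+5 = 2*l+6 by omega,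
            show l+(l+1)+3 = 2*l+4 by omega,
            show l+1+1 = l+2 by omega,
            show l+1+2 = l+3 by omega]
        push_cast [Nat.factorial_succ, Nat.factorial_zero, Nat.factorial_one]
        have h2 : (l:ℚ)+2 ≠ 0 := by positivity
        have h3 : (l:ℚ)+1+2 ≠ 0 := by positivity
        have h4 : (l:ℚ)+2+2 ≠ 0 := by positivity
        field_simp
        ring
      · -- l + 2 ≤ n
        rw [Nat.choose_eq_zero_of_lt (show l+2 < n+1 by omega),
            Nat.choose_eq_zero_of_lt (show l+1 < n+1 by omega),
            Nat.choose_eq_zero_of_lt (show l+1 < n by omega),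
            Nat.choose_eq_zero_of_lt (show l < n+1 by omega)]
        push_cast
        ring

theorem recurrence_A (l : ℕ) (hl : 1 ≤ l) :
    Polynomial.C ((l : ℚ) + 4) * fA (l + 2)
      = Polynomial.C (2 * (l : ℚ) + 5) * (1 - 2 * Polynomial.X) * fA (l + 1)
        - Polynomial.C ((l : ℚ) + 1) * fA l := by
  have expand : Polynomial.C (2 * (l : ℚ) + 5) * (1 - 2 * Polynomial.X) * fA (l + 1)
      = Polynomial.C (2 * (l : ℚ) + 5) * fA (l + 1)
        - Polynomial.C (2 * (2 * (l : ℚ) + 5)) * (Polynomial.X * fA (l + 1)) := by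
    simp only [map_mul, map_ofNat]; ring
  rw [expand]
  refine Polynomial.ext fun n => ?_
  rw [Polynomial.coeff_C_mul, Polynomial.coeff_sub, Polynomial.coeff_sub,
      Polynomial.coeff_C_mul, Polynomial.coeff_C_mul, Polynomial.coeff_C_mul]
  cases n with
  | zero =>
    simp only [fA_coeff, Polynomial.mul_coeff_zero, Polynomial.coeff_X_zero, zero_mul, mul_zero,
      sub_zero, pow_zero, Nat.choose_zero_right, Nat.cast_one, Nat.add_zero, Nat.choose_one_right,
      one_mul, mul_one, zero_add]
    push_cast
    have h2 : (l:ℚ)+2 ≠ 0 := by positivity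
    have h3 : (l:ℚ)+1+2 ≠ 0 := by positivity
    have h4 : (l:ℚ)+2+2 ≠ 0 := by positivity
    field_simp
    ring
  | succ n =>
    rw [Polynomial.coeff_X_mul]
    simp only [fA_coeff]
    rw [show l+2+(n+1)+2 = l+n+5 by omega,
        show l+1+(n+1)+2 = l+n+4 by omega,
        show l+1+n+2 = l+n+3 by omega,
        show l+(n+1)+2 = l+n+3 by omega,
        show n+1+1 = n+2 by omega]
    push_cast
    linear_combination ((-1:ℚ)^(n+1)) * key l n
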